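/- Suppose m is odd and let w₀ ∈ D_m be the diagonal matrix sending e_i ↦ −e_i for 1 ≤ i ≤ m−1 and e_m ↦ e_m. Then every u ∈ D_m with u² = 1 and u w₀ = w₀ u is conjugate to c_{k,l}, for exactly one pair (k,l) of integers with k,l ≥ 0 and 2k + l ≤ m−1, by an element of the centralizer of w₀ in D_m. -/

import Mathlib

/-- A real `m × m` matrix is a *signed permutation matrix* if it has exactly one nonzero
entry in each row and in each column, and each such entry is `1` or `−1`. -/
def IsSignedPerm {m : ℕ} (M : Matrix (Fin m) (Fin m) ℝ) : Prop :=
  (∀ i, ∃! j, M i j ≠ 0) ∧ (∀ j, ∃! i, M i j ≠ 0) ∧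
    (∀ i j, M i j = 0 ∨ M i j = 1 ∨ M i j = -1)

/-- Membership in the group `D_m` of signed permutation matrices with an even number of
entries equal to `−1` (a subgroup of `GL(m, ℝ)`). -/
def InD {m : ℕ} (M : Matrix (Fin m) (Fin m) ℝ) : Prop :=
  IsSignedPerm M ∧ Even (Nat.card {p : Fin m × Fin m // M p.1 p.2 = -1})

/-- The involution `c_{k,l} ∈ D_m` (written with 0-indexed rows/columns): it swaps the
standard basis vectors `e_{2j−1} ↔ e_{2j}` for `1 ≤ j ≤ k` (0-indexed: `e_{2j} ↔ e_{2j+1}`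
for `0 ≤ j < k`); if `l` is odd, it sends `e_i ↦ −e_i` for the last `l+1` indices
(0-indexed: `m − l − 1 ≤ i < m`); if `l` is even, it sends `e_i ↦ −e_i` for the `l`
indices with `m − l ≤ i ≤ m − 1` (1-indexed), sparing `e_m` (0-indexed:
`m − l − 1 ≤ i < m − 1`); and it fixes the remaining basis vectors. -/
def cD (m k l : ℕ) : Matrix (Fin m) (Fin m) ℝ :=
  Matrix.of fun i j =>
    if (j : ℕ) < 2 * k then
      (if (i : ℕ) = (if (j : ℕ) % 2 = 0 then (j : ℕ) + 1 else (j : ℕ) - 1) then 1 else 0)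
    else if (l % 2 = 1 ∧ m - l - 1 ≤ (j : ℕ)) ∨
        (l % 2 = 0 ∧ m - l - 1 ≤ (j : ℕ) ∧ (j : ℕ) < m - 1) then
      (if i = j then -1 else 0)
    else (if i = j then 1 else 0)

/-- The diagonal matrix `w₀` sending `e_i ↦ −e_i` for `1 ≤ i ≤ m−1` and `e_m ↦ e_m`
(0-indexed: it negates `e_i` for `i < m − 1` and fixes `e_{m−1}`). -/
def wD (m : ℕ) : Matrix (Fin m) (Fin m) ℝ :=
  Matrix.of fun i j =>
    if i = j then (if (i : ℕ) = m - 1 then 1 else -1) else 0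

open Finset
namespace S8
variable {m : ℕ}


def SP (σ : Equiv.Perm (Fin m)) (s : Fin m → ℝ) : Matrix (Fin m) (Fin m) ℝ :=
  Matrix.of fun i j => if i = σ j then s j else 0

lemma SP_mul (σ τ : Equiv.Perm (Fin m)) (s t : Fin m → ℝ) :
    SP σ s * SP τ t = SP (σ * τ) (fun j => s (τ j) * t j) := by
  ext i j
  simp only [SP, Matrix.mul_apply, Matrix.of_apply, ite_mul, zero_mul, mul_ite, mul_zero,
    Equiv.Perm.mul_apply]
  rw [Finset.sum_eq_single (τ j)] <;> simp +contextual
  exact if_congr Iff.rfl rfl rfl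

lemma SP_one : SP (1 : Equiv.Perm (Fin m)) (fun _ => 1) = 1 := by
  ext i j
  simp [SP, Matrix.one_apply, eq_comm]
  exact if_congr Iff.rfl rfl rfl

lemma SP_inj {σ τ : Equiv.Perm (Fin m)} {s t : Fin m → ℝ} (hs : ∀ j, s j ≠ 0)
    (h : SP σ s = SP τ t) : σ = τ ∧ s = t := by
  have key : ∀ j, σ j = τ j ∧ s j = t j := by
    intro j
    have := congrFun (congrFun h (σ j)) j
    simp only [SP, Matrix.of_apply, if_pos rfl, if_true, eq_self_iff_true] at this
    by_cases hc : σ j = τ j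
    · refine ⟨hc, ?_⟩; rw [this, if_pos hc]
    · rw [if_neg hc] at this; exact absurd this (hs j)
  exact ⟨Equiv.ext fun j => (key j).1, funext fun j => (key j).2⟩




lemma isSignedPerm_SP {σ : Equiv.Perm (Fin m)} {s : Fin m → ℝ}
    (hs : ∀ j, s j = 1 ∨ s j = -1) : IsSignedPerm (SP σ s) := by
  have hne : ∀ j, s j ≠ 0 := by intro j; rcases hs j with h | h <;> rw [h] <;> norm_num
  refine ⟨fun i => ⟨σ.symm i, ?_, ?_⟩, fun j => ⟨σ j, ?_, ?_⟩, fun i j => ?_⟩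
  · simp [SP]; exact hne _
  · intro j hj
    by_contra hne2
    apply hj
    simp only [SP, Matrix.of_apply]
    rw [if_neg]
    intro h
    exact hne2 (by rw [h]; simp)
  · simp [SP]; exact hne _
  · intro i hi
    by_contra hne2
    apply hi
    simp only [SP, Matrix.of_apply]
    rw [if_neg hne2]
  · simp only [SP, Matrix.of_apply]
    split
    · rcases hs j with h | h <;> simp [h]
    · left; rfl

lemma exists_SP {M : Matrix (Fin m) (Fin m) ℝ} (h : IsSignedPerm M) :
    ∃ (σ : Equiv.Perm (Fin m)) (s : Fin m → ℝ), M = SP σ s ∧ ∀ j, s j = 1 ∨ s j = -1 := by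
  obtain ⟨hrow, hcol, hent⟩ := h
  have hf : ∀ j, ∃ i, M i j ≠ 0 := fun j => (hcol j).exists
  choose f hfne using hf
  have hinj : Function.Injective f := by
    intro a b hab
    obtain ⟨j, hj, huniq⟩ := hrow (f a)
    have h1 := huniq a (hfne a)
    have h2 := huniq b (show M (f a) b ≠ 0 by rw [hab]; exact hfne b)
    rw [h1, h2]
  have hbij : Function.Bijective f := (Finite.injective_iff_bijective).mp hinj
  let σ := Equiv.ofBijective f hbij
  refine ⟨σ, fun j => M (f j) j, ?_, ?_⟩
  · ext i j
    simp only [SP, Matrix.of_apply]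
    by_cases hc : i = σ j
    · rw [if_pos hc]; exact congrArg (fun x => M x j) hc
    · rw [if_neg hc]
      by_contra hne
      obtain ⟨i', hi', huniq⟩ := hcol j
      have := (huniq i hne).trans (huniq (f j) (hfne j)).symm
      exact hc (this.trans rfl)
  · intro j
    rcases hent (f j) j with h | h | h
    · exact absurd h (hfne j)
    · exact Or.inl h
    · exact Or.inr h

lemma card_neg_SP (σ : Equiv.Perm (Fin m)) (s : Fin m → ℝ) (hs : ∀ j, s j = 1 ∨ s j = -1) :
    Nat.card {p : Fin m × Fin m // SP σ s p.1 p.2 = -1}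
      = (univ.filter (fun j => s j = -1)).card := by
  have e : {p : Fin m × Fin m // SP σ s p.1 p.2 = -1} ≃ {j : Fin m // s j = -1} := by
    refine ⟨fun p => ⟨p.1.2, ?_⟩, fun j => ⟨(σ j.1, j.1), ?_⟩, ?_, ?_⟩
    · have := p.2
      simp only [SP, Matrix.of_apply] at this
      split at this
      · exact this
      · norm_num at this
    · simpa [SP] using j.2
    · rintro ⟨⟨i, j⟩, hp⟩
      have hp' := hp
      simp only [SP, Matrix.of_apply] at hp'
      split at hp'
      · rename_i hij
        simp only [Subtype.mk.injEq, Prod.mk.injEq]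
        exact ⟨hij.symm, trivial⟩
      · norm_num at hp'
    · rintro ⟨j, hj⟩; rfl
  rw [Nat.card_congr e, Nat.card_eq_fintype_card, Fintype.card_subtype]




def w0s (m : ℕ) : Fin m → ℝ := fun j => if (j : ℕ) = m - 1 then 1 else -1

lemma wD_eq : wD m = SP 1 (w0s m) := by
  ext i j
  simp only [wD, SP, w0s, Matrix.of_apply, Equiv.Perm.one_apply]
  by_cases h : i = j
  · subst h; simp
  · rw [if_neg h]; exact (if_neg h).symm

def cfun (m k : ℕ) : Fin m → Fin m := fun j =>
  if h : (j : ℕ) < 2 * k ∧ (j : ℕ) % 2 = 0 ∧ (j : ℕ) + 1 < m then ⟨(j : ℕ) + 1, h.2.2⟩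
  else if h2 : (j : ℕ) < 2 * k ∧ (j : ℕ) % 2 = 1 then ⟨(j : ℕ) - 1, by omega⟩
  else j

lemma cfun_invol (m k : ℕ) : Function.Involutive (cfun m k) := by
  intro j
  unfold cfun
  split
  · rename_i h
    rw [dif_neg (by simp; omega), dif_pos (by simp; omega)]
    ext; simp
  · split
    · rename_i h h2
      have hj1 : 1 ≤ (j : ℕ) := by omega
      have hlt : (j : ℕ) - 1 + 1 < m := by omega
      rw [dif_pos (by simp; omega)]
      ext; simp; omega
    · rfl

def cperm (m k : ℕ) : Equiv.Perm (Fin m) := Function.Involutive.toPerm _ (cfun_invol m k)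

def csign (m k l : ℕ) : Fin m → ℝ := fun j =>
  if (l % 2 = 1 ∧ m - l - 1 ≤ (j : ℕ)) ∨
      (l % 2 = 0 ∧ m - l - 1 ≤ (j : ℕ) ∧ (j : ℕ) < m - 1) then -1 else 1

lemma csign_pm (m k l : ℕ) (j : Fin m) : csign m k l j = 1 ∨ csign m k l j = -1 := by
  unfold csign; split <;> simp

lemma cperm_apply_even {k : ℕ} {j : Fin m} (hj : (j : ℕ) < 2 * k) (he : (j : ℕ) % 2 = 0)
    (h1 : (j : ℕ) + 1 < m) : (cperm m k j : ℕ) = (j : ℕ) + 1 := by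
  show (cfun m k j : ℕ) = _
  unfold cfun
  rw [dif_pos ⟨hj, he, h1⟩]

lemma cperm_apply_odd {k : ℕ} {j : Fin m} (hj : (j : ℕ) < 2 * k) (ho : (j : ℕ) % 2 = 1) :
    (cperm m k j : ℕ) = (j : ℕ) - 1 := by
  show (cfun m k j : ℕ) = _
  unfold cfun
  rw [dif_neg (by omega), dif_pos ⟨hj, ho⟩]

lemma cperm_apply_ge {k : ℕ} {j : Fin m} (hj : ¬ (j : ℕ) < 2 * k) : cperm m k j = j := by
  show cfun m k j = j
  unfold cfun
  rw [dif_neg (by omega), dif_neg (by omega)]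

lemma cperm_fixed_iff {k : ℕ} (h2k : 2 * k ≤ m - 1) (hm : 1 ≤ m) (j : Fin m) :
    cperm m k j = j ↔ ¬ (j : ℕ) < 2 * k := by
  constructor
  · intro hfix hlt
    rcases Nat.even_or_odd (j : ℕ) with he | ho
    · have he' : (j : ℕ) % 2 = 0 := Nat.even_iff.mp he
      have h1 : (j : ℕ) + 1 < m := by omega
      have := cperm_apply_even hlt he' h1
      rw [hfix] at this; omega
    · have ho' : (j : ℕ) % 2 = 1 := Nat.odd_iff.mp ho
      have := cperm_apply_odd hlt ho'
      rw [hfix] at this; omega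
  · exact cperm_apply_ge

lemma cD_eq {k l : ℕ} (h : 2 * k + l ≤ m - 1) (hm : 1 ≤ m) :
    cD m k l = SP (cperm m k) (csign m k l) := by
  have hkl : 2 * k ≤ m - l - 1 := by omega
  ext i j
  simp only [cD, SP, Matrix.of_apply]
  by_cases hj : (j : ℕ) < 2 * k
  · rw [if_pos hj]
    have hcs : csign m k l j = 1 := by
      unfold csign; rw [if_neg]; rintro (⟨_, hle⟩ | ⟨_, hle, _⟩) <;> omega
    rw [hcs]
    rcases Nat.even_or_odd (j : ℕ) with he | ho
    · have he' : (j : ℕ) % 2 = 0 := Nat.even_iff.mp he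
      have h1 : (j : ℕ) + 1 < m := by omega
      rw [if_pos he']
      have hval := cperm_apply_even hj he' h1
      have hcp : cperm m k j = ⟨(j : ℕ) + 1, h1⟩ := Fin.ext hval
      rw [hcp]
      by_cases hc : (i : ℕ) = (j : ℕ) + 1
      · rw [if_pos hc, if_pos (Fin.ext hc)]
      · rw [if_neg hc, if_neg (fun hh => hc (congrArg Fin.val hh))]
    · have ho' : (j : ℕ) % 2 = 1 := Nat.odd_iff.mp ho
      have hsel : (if (j : ℕ) % 2 = 0 then (j : ℕ) + 1 else (j : ℕ) - 1) = (j : ℕ) - 1 :=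
        if_neg (by omega)
      rw [hsel]
      have hval := cperm_apply_odd hj ho'
      have hcp : cperm m k j = ⟨(j : ℕ) - 1, by omega⟩ := Fin.ext hval
      rw [hcp]
      by_cases hc : (i : ℕ) = (j : ℕ) - 1
      · rw [if_pos hc, if_pos (Fin.ext hc)]
      · rw [if_neg hc, if_neg (fun hh => hc (congrArg Fin.val hh))]
  · rw [if_neg hj, cperm_apply_ge hj]
    unfold csign
    split <;> rfl

lemma card_filter_val (P : ℕ → Prop) [DecidablePred P] :
    (univ.filter (fun j : Fin m => P (j : ℕ))).card = ((Finset.range m).filter P).card := by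
  apply Finset.card_bij (fun (a : Fin m) _ => (a : ℕ))
  · intro a ha
    simp only [mem_filter, mem_range]
    exact ⟨a.isLt, (mem_filter.mp ha).2⟩
  · intro a _ b _ hab
    exact Fin.ext hab
  · intro b hb
    simp only [mem_filter, mem_range] at hb
    exact ⟨⟨b, hb.1⟩, by simp [hb.2], rfl⟩

lemma card_cperm_moved {k : ℕ} (h2k : 2 * k ≤ m - 1) (hm : 1 ≤ m) :
    (univ.filter (fun j : Fin m => cperm m k j ≠ j)).card = 2 * k := by
  have : ∀ j : Fin m, (cperm m k j ≠ j) ↔ ((j : ℕ) < 2 * k) := by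
    intro j
    rw [Ne, cperm_fixed_iff h2k hm, not_not]
  rw [Finset.filter_congr (fun j _ => by rw [this])]
  rw [card_filter_val (fun x => x < 2 * k)]
  have : (Finset.range m).filter (fun x => x < 2 * k) = Finset.range (2 * k) := by
    ext x; simp; omega
  rw [this, Finset.card_range]

lemma card_cperm_fixneg {k l : ℕ} (h : 2 * k + l ≤ m - 1) (hm : 1 ≤ m) :
    (univ.filter (fun j : Fin m =>
      cperm m k j = j ∧ csign m k l j = -1 ∧ (j : ℕ) ≠ m - 1)).card = l := by
  have key : ∀ j : Fin m, (cperm m k j = j ∧ csign m k l j = -1 ∧ (j : ℕ) ≠ m - 1)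
      ↔ (m - l - 1 ≤ (j : ℕ) ∧ (j : ℕ) < m - 1) := by
    intro j
    constructor
    · rintro ⟨hfix, hneg, hne⟩
      have hcond : (l % 2 = 1 ∧ m - l - 1 ≤ (j : ℕ)) ∨
          (l % 2 = 0 ∧ m - l - 1 ≤ (j : ℕ) ∧ (j : ℕ) < m - 1) := by
        by_contra hc
        unfold csign at hneg
        rw [if_neg hc] at hneg
        norm_num at hneg
      have hjlt : (j : ℕ) < m := j.isLt
      rcases hcond with ⟨_, hle⟩ | ⟨_, hle, hlt⟩ <;> omega
    · rintro ⟨hle, hlt⟩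
      have hfix : cperm m k j = j := by
        rw [cperm_fixed_iff (by omega) hm]; omega
      refine ⟨hfix, ?_, by omega⟩
      unfold csign
      rw [if_pos]
      rcases Nat.even_or_odd l with he | ho
      · exact Or.inr ⟨Nat.even_iff.mp he, hle, hlt⟩
      · exact Or.inl ⟨Nat.odd_iff.mp ho, hle⟩
  rw [Finset.filter_congr (fun j _ => by rw [key])]
  rw [card_filter_val (fun x => m - l - 1 ≤ x ∧ x < m - 1)]
  have : (Finset.range m).filter (fun x => m - l - 1 ≤ x ∧ x < m - 1)
      = Finset.Ico (m - l - 1) (m - 1) := by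
    ext x; simp [Finset.mem_Ico]; omega
  rw [this, Nat.card_Ico]
  omega

lemma csign_last {k l : ℕ} (hm : 1 ≤ m) :
    csign m k l ⟨m - 1, by omega⟩ = if l % 2 = 1 then -1 else 1 := by
  have hv : ((⟨m - 1, by omega⟩ : Fin m) : ℕ) = m - 1 := rfl
  unfold csign
  rw [hv]
  by_cases hl : l % 2 = 1
  · rw [if_pos (Or.inl ⟨hl, by omega⟩), if_pos hl]
  · rw [if_neg, if_neg hl]
    rintro (⟨h1, _⟩ | ⟨_, _, h3⟩) <;> omega



lemma pair_card (σ : Equiv.Perm (Fin m)) (hinv : ∀ j, σ (σ j) = j) (t : Finset (Fin m))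
    (hcl : ∀ j ∈ t, σ j ∈ t) (hnf : ∀ j ∈ t, σ j ≠ j) :
    t.card = 2 * (t.filter (fun j => j < σ j)).card := by
  have hsplit : t = (t.filter (fun j => j < σ j)) ∪ (t.filter (fun j => σ j < j)) := by
    ext j
    simp only [Finset.mem_union, Finset.mem_filter]
    constructor
    · intro hj
      rcases lt_or_gt_of_ne (Ne.symm (hnf j hj)) with h | h
      · exact Or.inl ⟨hj, h⟩
      · exact Or.inr ⟨hj, h⟩
    · rintro (⟨h, _⟩ | ⟨h, _⟩) <;> exact h
  have hdisj : Disjoint (t.filter (fun j => j < σ j)) (t.filter (fun j => σ j < j)) := by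
    rw [Finset.disjoint_left]
    intro j h1 h2
    rw [Finset.mem_filter] at h1 h2
    exact lt_asymm h1.2 h2.2
  have hcard : (t.filter (fun j => σ j < j)).card = (t.filter (fun j => j < σ j)).card := by
    apply Finset.card_bij (fun j _ => σ j)
    · intro a ha
      rw [Finset.mem_filter] at ha ⊢
      exact ⟨hcl a ha.1, by rw [hinv]; exact ha.2⟩
    · intro a _ b _ hab
      exact σ.injective hab
    · intro b hb
      rw [Finset.mem_filter] at hb
      exact ⟨σ b, Finset.mem_filter.mpr ⟨hcl b hb.1, by rw [hinv]; exact hb.2⟩, hinv b⟩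
  conv_lhs => rw [hsplit]
  rw [Finset.card_union_of_disjoint hdisj, hcard]
  ring

lemma neg_parity (σ : Equiv.Perm (Fin m)) (s : Fin m → ℝ) (hm : 1 ≤ m)
    (hinv : ∀ j, σ (σ j) = j) (hsinv : ∀ j, s (σ j) = s j)
    (heven : Even (univ.filter (fun j => s j = -1)).card)
    (hlast : σ ⟨m - 1, by omega⟩ = ⟨m - 1, by omega⟩) :
    Even ((univ.filter (fun j => σ j = j ∧ s j = -1 ∧ (j : ℕ) ≠ m - 1)).card
      + (if s ⟨m - 1, by omega⟩ = -1 then 1 else 0)) := by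
  set last : Fin m := ⟨m - 1, by omega⟩ with hlastdef
  set N := univ.filter (fun j => s j = -1) with hN
  set N1 := N.filter (fun j => σ j ≠ j) with hN1
  set N2 := univ.filter (fun j => σ j = j ∧ s j = -1 ∧ (j : ℕ) ≠ m - 1) with hN2
  have hNsplit : N.card = N1.card + N2.card + (if s last = -1 then 1 else 0) := by
    by_cases hsl : s last = -1
    · rw [if_pos hsl]
      have : N = N1 ∪ (insert last N2) := by
        ext j
        simp only [hN, hN1, hN2, Finset.mem_union, Finset.mem_filter, Finset.mem_insert,
          Finset.mem_univ, true_and]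
        constructor
        · intro hj
          by_cases hfix : σ j = j
          · by_cases hjl : j = last
            · exact Or.inr (Or.inl hjl)
            · exact Or.inr (Or.inr ⟨hfix, hj, fun hv => hjl (Fin.ext hv)⟩)
          · exact Or.inl ⟨hj, hfix⟩
        · rintro (⟨hj, _⟩ | hj | ⟨_, hj, _⟩)
          · exact hj
          · rw [hj]; exact hsl
          · exact hj
      rw [this, Finset.card_union_of_disjoint, Finset.card_insert_of_notMem]
      · ring
      · simp only [hN2, Finset.mem_filter]
        rintro ⟨_, _, _, hne⟩
        exact hne rfl
      · rw [Finset.disjoint_left]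
        intro j h1 h2
        rw [Finset.mem_filter] at h1
        rcases Finset.mem_insert.mp h2 with h | h
        · exact h1.2 (by rw [h]; exact hlast)
        · exact h1.2 (Finset.mem_filter.mp h).2.1
    · rw [if_neg hsl]
      have : N = N1 ∪ N2 := by
        ext j
        simp only [hN, hN1, hN2, Finset.mem_union, Finset.mem_filter, Finset.mem_univ, true_and]
        constructor
        · intro hj
          by_cases hfix : σ j = j
          · refine Or.inr ⟨hfix, hj, fun hv => hsl ?_⟩
            have hjt : j = last := Fin.ext hv
            rw [← hjt]; exact hj
          · exact Or.inl ⟨hj, hfix⟩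
        · rintro (⟨hj, _⟩ | ⟨_, hj, _⟩) <;> exact hj
      rw [this, Finset.card_union_of_disjoint]
      · ring
      · rw [Finset.disjoint_left]
        intro j h1 h2
        rw [Finset.mem_filter] at h1 h2
        exact h1.2 h2.2.1
  have hN1even : Even N1.card := by
    rw [pair_card σ hinv N1 ?_ ?_]
    · exact ⟨_, two_mul _⟩
    · intro j hj
      rw [hN1, Finset.mem_filter, hN, Finset.mem_filter] at hj ⊢
      refine ⟨⟨Finset.mem_univ _, by rw [hsinv]; exact hj.1.2⟩, fun hc => hj.2 ?_⟩
      rw [hinv] at hc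
      exact hc.symm
    · intro j hj
      exact (Finset.mem_filter.mp hj).2
  rw [hNsplit] at heven
  rcases hN1even with ⟨a, ha⟩
  rcases heven with ⟨b, hb⟩
  refine ⟨b - a, ?_⟩
  omega




lemma setup_counts (hm : 3 ≤ m) (σ : Equiv.Perm (Fin m)) (s : Fin m → ℝ)
    (hs : ∀ j, s j = 1 ∨ s j = -1)
    (hinv : ∀ j, σ (σ j) = j)
    (hlast : σ ⟨m - 1, by omega⟩ = ⟨m - 1, by omega⟩)
    (k l : ℕ)
    (hk : k = (univ.filter (fun j => j < σ j)).card)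
    (hl : l = (univ.filter (fun j => σ j = j ∧ s j = -1 ∧ (j : ℕ) ≠ m - 1)).card) :
    (univ.filter (fun j : Fin m => σ j ≠ j)).card = 2 * k ∧
    m = 2 * k + l + (univ.filter (fun j : Fin m => σ j = j ∧ s j = 1 ∧ (j : ℕ) ≠ m - 1)).card
      + 1 := by
  set last : Fin m := ⟨m - 1, by omega⟩
  set Mov := univ.filter (fun j : Fin m => σ j ≠ j) with hMovd
  set Nu := univ.filter (fun j : Fin m => σ j = j ∧ s j = -1 ∧ (j : ℕ) ≠ m - 1) with hNud
  set Pu := univ.filter (fun j : Fin m => σ j = j ∧ s j = 1 ∧ (j : ℕ) ≠ m - 1) with hPud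
  have hMM : Mov.filter (fun j => j < σ j) = univ.filter (fun j => j < σ j) := by
    ext j
    simp only [hMovd, Finset.filter_filter, Finset.mem_filter, Finset.mem_univ, true_and]
    constructor
    · rintro ⟨_, h⟩; exact h
    · intro h; exact ⟨fun hc => absurd hc (ne_of_lt h).symm, h⟩
  have hMov : Mov.card = 2 * k := by
    rw [pair_card σ hinv Mov ?_ ?_, hMM, hk]
    · intro j hj
      simp only [hMovd, Finset.mem_filter, Finset.mem_univ, true_and] at hj ⊢
      intro hc
      rw [hinv] at hc
      exact hj hc.symm
    · intro j hj
      exact (Finset.mem_filter.mp hj).2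
  refine ⟨hMov, ?_⟩
  have huniv : (univ : Finset (Fin m)) = Mov ∪ (Nu ∪ (insert last Pu)) := by
    ext j
    simp only [Finset.mem_union, Finset.mem_filter, Finset.mem_univ, true_and,
      Finset.mem_insert, hMovd, hNud, hPud, true_iff]
    by_cases hfix : σ j = j
    · by_cases hjl : (j : ℕ) = m - 1
      · exact Or.inr (Or.inr (Or.inl (Fin.ext hjl)))
      · rcases hs j with h1 | h1
        · exact Or.inr (Or.inr (Or.inr ⟨hfix, h1, hjl⟩))
        · exact Or.inr (Or.inl ⟨hfix, h1, hjl⟩)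
    · exact Or.inl hfix
  have hlastPu : last ∉ Pu := by
    simp only [hPud, Finset.mem_filter]
    rintro ⟨_, _, _, hne⟩
    exact hne rfl
  have hd1 : Disjoint Nu (insert last Pu) := by
    rw [Finset.disjoint_left]
    intro j h1 h2
    simp only [hNud, Finset.mem_filter, Finset.mem_univ, true_and] at h1
    rcases Finset.mem_insert.mp h2 with h | h
    · exact h1.2.2 (by rw [h])
    · simp only [hPud, Finset.mem_filter, Finset.mem_univ, true_and] at h
      exact absurd (h1.2.1.symm.trans h.2.1) (by norm_num)
  have hd2 : Disjoint Mov (Nu ∪ insert last Pu) := by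
    rw [Finset.disjoint_left]
    intro j h1 h2
    simp only [hMovd, Finset.mem_filter, Finset.mem_univ, true_and] at h1
    rcases Finset.mem_union.mp h2 with h | h
    · exact h1 (Finset.mem_filter.mp h).2.1
    · rcases Finset.mem_insert.mp h with h | h
      · rw [h] at h1; exact h1 hlast
      · exact h1 (Finset.mem_filter.mp h).2.1
  have := Finset.card_univ (α := Fin m)
  have hcard : (univ : Finset (Fin m)).card
      = Mov.card + (Nu.card + (Pu.card + 1)) := by
    rw [huniv, Finset.card_union_of_disjoint hd2, Finset.card_union_of_disjoint hd1,
      Finset.card_insert_of_notMem hlastPu]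
  rw [Finset.card_univ, Fintype.card_fin] at hcard
  omega


lemma csign_neg {k l : ℕ} (j : Fin m) (h1 : m - l - 1 ≤ (j : ℕ)) (h2 : (j : ℕ) < m - 1) :
    csign m k l j = -1 := by
  unfold csign
  rw [if_pos]
  rcases Nat.even_or_odd l with he | ho
  · exact Or.inr ⟨Nat.even_iff.mp he, h1, h2⟩
  · exact Or.inl ⟨Nat.odd_iff.mp ho, h1⟩

lemma csign_pos {k l : ℕ} (j : Fin m) (h : (j : ℕ) < m - l - 1) : csign m k l j = 1 := by
  unfold csign
  rw [if_neg]
  rintro (⟨_, hle⟩ | ⟨_, hle, _⟩) <;> omega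

set_option maxHeartbeats 2000000 in
lemma construct (hm : 3 ≤ m) (σ : Equiv.Perm (Fin m)) (s : Fin m → ℝ)
    (hs : ∀ j, s j = 1 ∨ s j = -1)
    (hinv : ∀ j, σ (σ j) = j)
    (hsinv : ∀ j, s (σ j) = s j)
    (hlast : σ ⟨m - 1, by omega⟩ = ⟨m - 1, by omega⟩)
    (heven : Even (univ.filter (fun j => s j = -1)).card)
    (k l : ℕ)
    (hk : k = (univ.filter (fun j => j < σ j)).card)
    (hl : l = (univ.filter (fun j => σ j = j ∧ s j = -1 ∧ (j : ℕ) ≠ m - 1)).card) :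
    2 * k + l ≤ m - 1 ∧
    ∃ (τ : Equiv.Perm (Fin m)) (t : Fin m → ℝ),
      (∀ j, t j = 1 ∨ t j = -1) ∧
      Even ((univ.filter (fun j => t j = -1)).card) ∧
      τ ⟨m - 1, by omega⟩ = ⟨m - 1, by omega⟩ ∧
      (∀ j, σ (τ j) = τ (cperm m k j)) ∧
      (∀ j, s (τ j) * t j = t (cperm m k j) * csign m k l j) := by
  obtain ⟨hMov, hpart⟩ := setup_counts hm σ s hs hinv hlast k l hk hl
  have hkl : 2 * k + l ≤ m - 1 := by omega
  have hm1 : 1 ≤ m := by omega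
  set last : Fin m := ⟨m - 1, by omega⟩ with hlastd
  have hlastv : (last : ℕ) = m - 1 := rfl
  set P := univ.filter (fun j : Fin m => j < σ j) with hPd
  set Nu := univ.filter (fun j : Fin m => σ j = j ∧ s j = -1 ∧ (j : ℕ) ≠ m - 1) with hNud
  set Pu := univ.filter (fun j : Fin m => σ j = j ∧ s j = 1 ∧ (j : ℕ) ≠ m - 1) with hPud
  set Nc := univ.filter (fun j : Fin m => m - l - 1 ≤ (j : ℕ) ∧ (j : ℕ) < m - 1) with hNcd
  set Pc := univ.filter (fun j : Fin m => 2 * k ≤ (j : ℕ) ∧ (j : ℕ) < m - l - 1) with hPcd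
  have hkP : P.card = k := hk.symm
  have hNc : Nc.card = l := by
    rw [hNcd, card_filter_val (fun x => m - l - 1 ≤ x ∧ x < m - 1)]
    have : (Finset.range m).filter (fun x => m - l - 1 ≤ x ∧ x < m - 1)
        = Finset.Ico (m - l - 1) (m - 1) := by
      ext x; simp [Finset.mem_Ico]; omega
    rw [this, Nat.card_Ico]
    omega
  have hPc : Pc.card = Pu.card := by
    rw [hPcd, card_filter_val (fun x => 2 * k ≤ x ∧ x < m - l - 1)]
    have : (Finset.range m).filter (fun x => 2 * k ≤ x ∧ x < m - l - 1)
        = Finset.Ico (2 * k) (m - l - 1) := by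
      ext x; simp [Finset.mem_Ico]; omega
    rw [this, Nat.card_Ico]
    omega
  have eN : {x : Fin m // x ∈ Nc} ≃ {x : Fin m // x ∈ Nu} :=
    Finset.equivOfCardEq (by rw [hNc, hl])
  have eQ : {x : Fin m // x ∈ Pc} ≃ {x : Fin m // x ∈ Pu} := Finset.equivOfCardEq hPc
  set fP : ℕ → Fin m := fun n =>
    if h : n < P.card then (P.equivFin.symm ⟨n, h⟩ : Fin m) else last with hfPd
  have hfP_mem : ∀ n, n < P.card → fP n ∈ P := by
    intro n h
    simp only [hfPd]
    rw [dif_pos h]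
    exact (P.equivFin.symm ⟨n, h⟩).2
  have hfP_inj : ∀ n1 n2, n1 < P.card → n2 < P.card → fP n1 = fP n2 → n1 = n2 := by
    intro n1 n2 h1 h2 h
    simp only [hfPd] at h
    rw [dif_pos h1, dif_pos h2] at h
    have := P.equivFin.symm.injective (Subtype.ext h)
    exact congrArg Fin.val this
  have hmemP : ∀ x : Fin m, x ∈ P → x < σ x := by
    intro x hx
    exact (Finset.mem_filter.mp hx).2
  have hmemNu : ∀ x : Fin m, x ∈ Nu → σ x = x ∧ s x = -1 ∧ (x : ℕ) ≠ m - 1 := by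
    intro x hx
    exact (Finset.mem_filter.mp hx).2
  have hmemPu : ∀ x : Fin m, x ∈ Pu → σ x = x ∧ s x = 1 ∧ (x : ℕ) ≠ m - 1 := by
    intro x hx
    exact (Finset.mem_filter.mp hx).2
  have hmemNc : ∀ x : Fin m, x ∈ Nc ↔ (m - l - 1 ≤ (x : ℕ) ∧ (x : ℕ) < m - 1) := by
    intro x
    simp only [hNcd, Finset.mem_filter, Finset.mem_univ, true_and]
  have hmemPc : ∀ x : Fin m, x ∈ Pc ↔ (2 * k ≤ (x : ℕ) ∧ (x : ℕ) < m - l - 1) := by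
    intro x
    simp only [hPcd, Finset.mem_filter, Finset.mem_univ, true_and]
  set F : Fin m → Fin m := fun j =>
    if (j : ℕ) < 2 * k then
      (if (j : ℕ) % 2 = 0 then fP ((j : ℕ) / 2) else σ (fP ((j : ℕ) / 2)))
    else if h2 : j ∈ Nc then (eN ⟨j, h2⟩ : Fin m)
    else if h3 : j ∈ Pc then (eQ ⟨j, h3⟩ : Fin m)
    else j with hFd
  have hFe : ∀ a : Fin m, (a : ℕ) < 2 * k → (a : ℕ) % 2 = 0 → F a = fP ((a : ℕ) / 2) := by
    intro a h1 h2
    simp only [hFd]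
    rw [if_pos h1, if_pos h2]
  have hFo : ∀ a : Fin m, (a : ℕ) < 2 * k → (a : ℕ) % 2 = 1 → F a = σ (fP ((a : ℕ) / 2)) := by
    intro a h1 h2
    simp only [hFd]
    rw [if_pos h1, if_neg (by omega)]
  have hFN : ∀ a : Fin m, (h : a ∈ Nc) → F a = (eN ⟨a, h⟩ : Fin m) := by
    intro a h
    have hge : ¬ (a : ℕ) < 2 * k := by
      have := (hmemNc a).mp h
      omega
    simp only [hFd]
    rw [if_neg hge, dif_pos h]
  have hFQ : ∀ a : Fin m, (hnN : a ∉ Nc) → (h : a ∈ Pc) → F a = (eQ ⟨a, h⟩ : Fin m) := by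
    intro a hnN h
    have hge : ¬ (a : ℕ) < 2 * k := by
      have := (hmemPc a).mp h
      omega
    simp only [hFd]
    rw [if_neg hge, dif_neg hnN, dif_pos h]
  have hElse : ∀ a : Fin m, ¬ (a : ℕ) < 2 * k → a ∉ Nc → a ∉ Pc → a = last := by
    intro a h1 h2 h3
    rw [hmemNc] at h2
    rw [hmemPc] at h3
    have := a.isLt
    exact Fin.ext (by omega)
  have hFlast : F last = last := by
    simp only [hFd]
    rw [if_neg (by omega), dif_neg (by rw [hmemNc]; omega),
      dif_neg (by rw [hmemPc]; omega)]
  -- classification of images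
  have hdiv : ∀ a : Fin m, (a : ℕ) < 2 * k → (a : ℕ) / 2 < P.card := by
    intro a h
    rw [hkP]
    omega
  have hclass : ∀ a : Fin m,
      ((a : ℕ) < 2 * k ∧ (a : ℕ) % 2 = 0 ∧ F a < σ (F a))
      ∨ ((a : ℕ) < 2 * k ∧ (a : ℕ) % 2 = 1 ∧ σ (F a) < F a)
      ∨ (a ∈ Nc ∧ σ (F a) = F a ∧ s (F a) = -1 ∧ ((F a) : ℕ) ≠ m - 1)
      ∨ (a ∉ Nc ∧ a ∈ Pc ∧ σ (F a) = F a ∧ s (F a) = 1 ∧ ((F a) : ℕ) ≠ m - 1)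
      ∨ (a = last ∧ F a = last) := by
    intro a
    by_cases h1 : (a : ℕ) < 2 * k
    · rcases Nat.even_or_odd (a : ℕ) with he | ho
      · have he' : (a : ℕ) % 2 = 0 := Nat.even_iff.mp he
        refine Or.inl ⟨h1, he', ?_⟩
        rw [hFe a h1 he']
        exact hmemP _ (hfP_mem _ (hdiv a h1))
      · have ho' : (a : ℕ) % 2 = 1 := Nat.odd_iff.mp ho
        refine Or.inr (Or.inl ⟨h1, ho', ?_⟩)
        rw [hFo a h1 ho', hinv]
        exact hmemP _ (hfP_mem _ (hdiv a h1))
    · by_cases h2 : a ∈ Nc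
      · refine Or.inr (Or.inr (Or.inl ⟨h2, ?_⟩))
        rw [hFN a h2]
        exact And.intro ((hmemNu _ (eN ⟨a, h2⟩).2).1) ⟨(hmemNu _ (eN ⟨a, h2⟩).2).2.1,
          (hmemNu _ (eN ⟨a, h2⟩).2).2.2⟩
      · by_cases h3 : a ∈ Pc
        · refine Or.inr (Or.inr (Or.inr (Or.inl ⟨h2, h3, ?_⟩)))
          rw [hFQ a h2 h3]
          exact And.intro ((hmemPu _ (eQ ⟨a, h3⟩).2).1) ⟨(hmemPu _ (eQ ⟨a, h3⟩).2).2.1,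
            (hmemPu _ (eQ ⟨a, h3⟩).2).2.2⟩
        · have ha := hElse a h1 h2 h3
          exact Or.inr (Or.inr (Or.inr (Or.inr ⟨ha, ha ▸ hFlast⟩)))
  have hFinj : Function.Injective F := by
    intro a b hab
    rcases hclass a with ⟨ha1, ha2, ha3⟩ | ⟨ha1, ha2, ha3⟩ | ⟨ha1, ha2, ha3, ha4⟩ |
      ⟨ha0, ha1, ha2, ha3, ha4⟩ | ⟨ha1, ha2⟩ <;>
      rcases hclass b with ⟨hb1, hb2, hb3⟩ | ⟨hb1, hb2, hb3⟩ | ⟨hb1, hb2, hb3, hb4⟩ |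
        ⟨hb0, hb1, hb2, hb3, hb4⟩ | ⟨hb1, hb2⟩
    · -- even, even
      have h1 := hFe a ha1 ha2
      have h2 := hFe b hb1 hb2
      rw [h1, h2] at hab
      have := hfP_inj _ _ (hdiv a ha1) (hdiv b hb1) hab
      exact Fin.ext (by omega)
    · exact absurd (hab ▸ ha3) (lt_asymm (hab ▸ hb3))
    · rw [hab, hb2] at ha3
      exact absurd ha3 (lt_irrefl _)
    · rw [hab, hb2] at ha3
      exact absurd ha3 (lt_irrefl _)
    · rw [hab, hb2, hlast] at ha3
      exact absurd ha3 (lt_irrefl _)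
    · exact absurd (hab ▸ ha3) (lt_asymm (hab ▸ hb3))
    · -- odd, odd
      have h1 := hFo a ha1 ha2
      have h2 := hFo b hb1 hb2
      rw [h1, h2] at hab
      have := hfP_inj _ _ (hdiv a ha1) (hdiv b hb1) (σ.injective hab)
      exact Fin.ext (by omega)
    · rw [hab, hb2] at ha3
      exact absurd ha3 (lt_irrefl _)
    · rw [hab, hb2] at ha3
      exact absurd ha3 (lt_irrefl _)
    · rw [hab, hb2, hlast] at ha3
      exact absurd ha3 (lt_irrefl _)
    · rw [← hab, ha2] at hb3
      exact absurd hb3 (lt_irrefl _)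
    · rw [← hab, ha2] at hb3
      exact absurd hb3 (lt_irrefl _)
    · -- Nc, Nc
      have h1 := hFN a ha1
      have h2 := hFN b hb1
      rw [h1, h2] at hab
      have := eN.injective (Subtype.ext hab)
      exact congrArg Subtype.val this
    · rw [hab, hb3] at ha3
      exact absurd ha3 (by norm_num)
    · rw [hab, hb2, hlastv] at ha4
      exact absurd rfl ha4
    · rw [← hab, ha2] at hb3
      exact absurd hb3 (lt_irrefl _)
    · rw [← hab, ha2] at hb3
      exact absurd hb3 (lt_irrefl _)
    · rw [← hab, ha3] at hb3
      exact absurd hb3 (by norm_num)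
    · -- Pc, Pc
      have h1 := hFQ a ha0 ha1
      have h2 := hFQ b hb0 hb1
      rw [h1, h2] at hab
      have := eQ.injective (Subtype.ext hab)
      exact congrArg Subtype.val this
    · rw [hab, hb2, hlastv] at ha4
      exact absurd rfl ha4
    · rw [← hab, ha2, hlast] at hb3
      exact absurd hb3 (lt_irrefl _)
    · rw [← hab, ha2, hlast] at hb3
      exact absurd hb3 (lt_irrefl _)
    · rw [← hab, ha2, hlastv] at hb4
      exact absurd rfl hb4
    · rw [← hab, ha2, hlastv] at hb4
      exact absurd rfl hb4
    · exact ha1.trans hb1.symm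
  have hFbij : Function.Bijective F := Finite.injective_iff_bijective.mp hFinj
  set τ : Equiv.Perm (Fin m) := Equiv.ofBijective F hFbij with hτd
  have hτ : ∀ j, τ j = F j := fun j => rfl
  have hcomm : ∀ j : Fin m, σ (τ j) = τ (cperm m k j) := by
    intro j
    rw [hτ, hτ]
    by_cases h1 : (j : ℕ) < 2 * k
    · rcases Nat.even_or_odd (j : ℕ) with he | ho
      · have he' : (j : ℕ) % 2 = 0 := Nat.even_iff.mp he
        have hj1 : (j : ℕ) + 1 < m := by omega
        have hcv : (cperm m k j : ℕ) = (j : ℕ) + 1 := cperm_apply_even h1 he' hj1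
        rw [hFe j h1 he', hFo _ (by omega) (by omega), hcv]
        have hdiv2 : ((j : ℕ) + 1) / 2 = (j : ℕ) / 2 := by omega
        rw [hdiv2]
      · have ho' : (j : ℕ) % 2 = 1 := Nat.odd_iff.mp ho
        have hcv : (cperm m k j : ℕ) = (j : ℕ) - 1 := cperm_apply_odd h1 ho'
        rw [hFo j h1 ho', hinv, hFe _ (by omega) (by omega), hcv]
        have hdiv2 : ((j : ℕ) - 1) / 2 = (j : ℕ) / 2 := by omega
        rw [hdiv2]
    · have hfix : cperm m k j = j := cperm_apply_ge h1
      rw [hfix]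
      by_cases h2 : j ∈ Nc
      · rw [hFN j h2]
        exact (hmemNu _ (eN ⟨j, h2⟩).2).1
      · by_cases h3 : j ∈ Pc
        · rw [hFQ j h2 h3]
          exact (hmemPu _ (eQ ⟨j, h3⟩).2).1
        · rw [hElse j h1 h2 h3, hFlast]
          exact hlast
  have hparity := neg_parity σ s hm1 hinv hsinv heven hlast
  rw [← hNud, ← hl] at hparity
  have hslast : s last = csign m k l last := by
    have hcs : csign m k l last = if l % 2 = 1 then -1 else 1 := csign_last hm1
    rcases hparity with ⟨c, hc⟩
    rcases hs last with h1 | h1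
    · rw [if_neg (by rw [h1]; norm_num)] at hc
      rw [h1, hcs, if_neg (by omega)]
    · rw [if_pos h1] at hc
      rw [h1, hcs, if_pos (by omega)]
  have hsfix : ∀ j : Fin m, ¬ (j : ℕ) < 2 * k → s (F j) = csign m k l j := by
    intro j h1
    by_cases h2 : j ∈ Nc
    · rw [hFN j h2, (hmemNu _ (eN ⟨j, h2⟩).2).2.1,
        csign_neg j ((hmemNc j).mp h2).1 ((hmemNc j).mp h2).2]
    · by_cases h3 : j ∈ Pc
      · rw [hFQ j h2 h3, (hmemPu _ (eQ ⟨j, h3⟩).2).2.1, csign_pos j ((hmemPc j).mp h3).2]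
      · rw [hElse j h1 h2 h3, hFlast]
        exact hslast
  set A := univ.filter (fun j : Fin m => (j : ℕ) < 2 * k ∧ (j : ℕ) % 2 = 1 ∧ s (F j) = -1)
    with hAd
  set ε : ℝ := if Even A.card then 1 else -1 with hεd
  set t : Fin m → ℝ := fun j =>
    if (j : ℕ) < 2 * k ∧ (j : ℕ) % 2 = 1 then s (F j)
    else if (j : ℕ) = m - 1 then ε else 1 with htd
  have ht_pm : ∀ j, t j = 1 ∨ t j = -1 := by
    intro j
    simp only [htd]
    by_cases h1 : (j : ℕ) < 2 * k ∧ (j : ℕ) % 2 = 1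
    · rw [if_pos h1]; exact hs _
    · rw [if_neg h1]
      by_cases h2 : (j : ℕ) = m - 1
      · rw [if_pos h2, hεd]
        by_cases hA : Even A.card
        · rw [if_pos hA]; exact Or.inl rfl
        · rw [if_neg hA]; exact Or.inr rfl
      · rw [if_neg h2]; exact Or.inl rfl
  have hlastA : last ∉ A := by
    intro hA
    have := (Finset.mem_filter.mp hA).2.1
    omega
  have hteq : univ.filter (fun j => t j = -1) = if Even A.card then A else insert last A := by
    ext j
    simp only [Finset.mem_filter, Finset.mem_univ, true_and, htd]
    by_cases h1 : (j : ℕ) < 2 * k ∧ (j : ℕ) % 2 = 1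
    · rw [if_pos h1]
      have hjA : s (F j) = -1 ↔ j ∈ A := by
        simp only [hAd, Finset.mem_filter, Finset.mem_univ, true_and]
        exact ⟨fun h => ⟨h1.1, h1.2, h⟩, fun h => h.2.2⟩
      by_cases hA : Even A.card
      · rw [if_pos hA]; exact hjA
      · rw [if_neg hA, Finset.mem_insert]
        constructor
        · intro h; exact Or.inr (hjA.mp h)
        · rintro (h | h)
          · exfalso; rw [h] at h1; omega
          · exact hjA.mpr h
    · rw [if_neg h1]
      by_cases h2 : (j : ℕ) = m - 1
      · have hj : j = last := Fin.ext (h2.trans hlastv.symm)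
        rw [if_pos h2]
        by_cases hA : Even A.card
        · rw [hεd, if_pos hA, if_pos hA]
          constructor
          · intro h; norm_num at h
          · intro h; exact absurd (hj ▸ h) hlastA
        · rw [hεd, if_neg hA, if_neg hA]
          constructor
          · intro _; rw [hj]; exact Finset.mem_insert_self _ _
          · intro _; rfl
      · rw [if_neg h2]
        constructor
        · intro h; norm_num at h
        · intro h
          exfalso
          by_cases hA : Even A.card
          · rw [if_pos hA] at h
            have := (Finset.mem_filter.mp h).2
            exact h1 ⟨this.1, this.2.1⟩
          · rw [if_neg hA] at h
            rcases Finset.mem_insert.mp h with h | h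
            · exact h2 (by rw [h, hlastv])
            · have := (Finset.mem_filter.mp h).2
              exact h1 ⟨this.1, this.2.1⟩
  have ht_even : Even ((univ.filter fun j => t j = -1).card) := by
    rw [hteq]
    by_cases hA : Even A.card
    · rw [if_pos hA]; exact hA
    · rw [if_neg hA, Finset.card_insert_of_notMem hlastA]
      exact Nat.even_add_one.mpr (fun h => hA h)
  have hsign : ∀ j, s (τ j) * t j = t (cperm m k j) * csign m k l j := by
    intro j
    rw [hτ]
    by_cases h1 : (j : ℕ) < 2 * k
    · have hcspos : csign m k l j = 1 := csign_pos j (by omega)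
      rcases Nat.even_or_odd (j : ℕ) with he | ho
      · have he' : (j : ℕ) % 2 = 0 := Nat.even_iff.mp he
        have hj1 : (j : ℕ) + 1 < m := by omega
        have hcv : (cperm m k j : ℕ) = (j : ℕ) + 1 := cperm_apply_even h1 he' hj1
        have htj : t j = 1 := by
          simp only [htd]
          rw [if_neg (by omega), if_neg (by omega)]
        have htc : t (cperm m k j) = s (F (cperm m k j)) := by
          simp only [htd]
          rw [if_pos ⟨by omega, by omega⟩]
        have hFc : F (cperm m k j) = σ (fP (((j : ℕ) + 1) / 2)) := by
          rw [hFo _ (by omega) (by omega), hcv]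
        have hdiv2 : ((j : ℕ) + 1) / 2 = (j : ℕ) / 2 := by omega
        rw [htj, htc, hFc, hdiv2, hsinv, hFe j h1 he', hcspos]
        try ring
      · have ho' : (j : ℕ) % 2 = 1 := Nat.odd_iff.mp ho
        have hcv : (cperm m k j : ℕ) = (j : ℕ) - 1 := cperm_apply_odd h1 ho'
        have htj : t j = s (F j) := by
          simp only [htd]
          rw [if_pos ⟨h1, ho'⟩]
        have htc : t (cperm m k j) = 1 := by
          simp only [htd]
          rw [if_neg (by omega), if_neg (by omega)]
        rw [htj, htc, hcspos]
        rcases hs (F j) with h | h <;> rw [h] <;> norm_num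
    · have hfix : cperm m k j = j := cperm_apply_ge h1
      rw [hfix, hsfix j h1]
      ring
  exact ⟨hkl, τ, t, ht_pm, ht_even, hFlast, hcomm, hsign⟩

lemma unique_kl (hm : 3 ≤ m) (σ : Equiv.Perm (Fin m)) (s : Fin m → ℝ)
    (τ : Equiv.Perm (Fin m)) (t : Fin m → ℝ)
    (ht : ∀ j, t j = 1 ∨ t j = -1)
    (hinv : ∀ j, σ (σ j) = j)
    (k' l' : ℕ) (hb : 2 * k' + l' ≤ m - 1)
    (hτlast : τ ⟨m - 1, by omega⟩ = ⟨m - 1, by omega⟩)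
    (hcomm : ∀ j, σ (τ j) = τ (cperm m k' j))
    (hsig : ∀ j, s (τ j) * t j = t (cperm m k' j) * csign m k' l' j) :
    k' = (univ.filter (fun j => j < σ j)).card ∧
    l' = (univ.filter (fun j => σ j = j ∧ s j = -1 ∧ (j : ℕ) ≠ m - 1)).card := by
  have hm1 : 1 ≤ m := by omega
  have h2k : 2 * k' ≤ m - 1 := by omega
  have ht0 : ∀ j, t j ≠ 0 := by
    intro j
    rcases ht j with h | h <;> rw [h] <;> norm_num
  set last : Fin m := ⟨m - 1, by omega⟩ with hlastd
  have hlastv : (last : ℕ) = m - 1 := rfl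
  -- for cperm-fixed j, s (τ j) = csign j
  have hsfix : ∀ j, cperm m k' j = j → s (τ j) = csign m k' l' j := by
    intro j hfix
    have h := hsig j
    rw [hfix] at h
    have : s (τ j) * t j = csign m k' l' j * t j := by rw [h]; ring
    exact mul_right_cancel₀ (ht0 j) this
  constructor
  · -- k'
    have hMc := card_cperm_moved (m := m) h2k hm1
    have hbij : (univ.filter (fun j : Fin m => cperm m k' j ≠ j)).card
        = (univ.filter (fun j : Fin m => σ j ≠ j)).card := by
      apply Finset.card_bij (fun j _ => τ j)
      · intro a ha
        rw [Finset.mem_filter] at ha ⊢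
        refine ⟨Finset.mem_univ _, ?_⟩
        rw [hcomm]
        exact fun hc => ha.2 (τ.injective hc)
      · intro a _ b _ hab
        exact τ.injective hab
      · intro b hb
        rw [Finset.mem_filter] at hb
        refine ⟨τ.symm b, Finset.mem_filter.mpr ⟨Finset.mem_univ _, ?_⟩, τ.apply_symm_apply b⟩
        intro hc
        apply hb.2
        have h5 := hcomm (τ.symm b)
        rw [hc, τ.apply_symm_apply] at h5
        exact h5
      -- done
    have hpc := pair_card σ hinv (univ.filter (fun j : Fin m => σ j ≠ j)) ?_ ?_
    · have hMM : (univ.filter (fun j : Fin m => σ j ≠ j)).filter (fun j => j < σ j)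
          = univ.filter (fun j : Fin m => j < σ j) := by
        ext j
        simp only [Finset.filter_filter, Finset.mem_filter, Finset.mem_univ, true_and]
        constructor
        · rintro ⟨_, h⟩; exact h
        · intro h; exact ⟨fun hc => absurd hc (ne_of_lt h).symm, h⟩
      rw [hMM] at hpc
      omega
    · intro j hj
      rw [Finset.mem_filter] at hj ⊢
      refine ⟨Finset.mem_univ _, fun hc => ?_⟩
      rw [hinv] at hc
      exact hj.2 hc.symm
    · intro j hj
      exact (Finset.mem_filter.mp hj).2
  · -- l'
    have hNc := card_cperm_fixneg (m := m) hb hm1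
    have hbij : (univ.filter (fun j : Fin m =>
        cperm m k' j = j ∧ csign m k' l' j = -1 ∧ (j : ℕ) ≠ m - 1)).card
        = (univ.filter (fun j : Fin m => σ j = j ∧ s j = -1 ∧ (j : ℕ) ≠ m - 1)).card := by
      apply Finset.card_bij (fun j _ => τ j)
      · intro a ha
        rw [Finset.mem_filter] at ha ⊢
        obtain ⟨_, hfix, hneg, hne⟩ := ha
        refine ⟨Finset.mem_univ _, ?_, ?_, ?_⟩
        · rw [hcomm, hfix]
        · rw [hsfix a hfix, hneg]
        · intro hc
          have : τ a = last := Fin.ext (hc.trans hlastv.symm)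
          rw [show last = τ last from hτlast.symm] at this
          have := τ.injective this
          apply hne
          rw [this, hlastv]
      · intro a _ b _ hab
        exact τ.injective hab
      · intro b hb
        rw [Finset.mem_filter] at hb
        obtain ⟨_, hfix, hneg, hne⟩ := hb
        have hτb : τ (τ.symm b) = b := τ.apply_symm_apply b
        have hfix' : cperm m k' (τ.symm b) = τ.symm b := by
          apply τ.injective
          rw [← hcomm, hτb, hfix]
        refine ⟨τ.symm b, Finset.mem_filter.mpr ⟨Finset.mem_univ _, hfix', ?_, ?_⟩, hτb⟩
        · have h6 := hsfix _ hfix'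
          rw [hτb] at h6
          rw [← h6]
          exact hneg
        · intro hc
          have : τ.symm b = last := Fin.ext hc
          apply hne
          rw [← hτb, this, hτlast, hlastv]
    omega

lemma sp_mul_w (τ : Equiv.Perm (Fin m)) (t : Fin m → ℝ) :
    SP τ t * wD m = SP τ (fun j => t j * w0s m j) := by
  rw [wD_eq, SP_mul]
  have h1 : τ * 1 = τ := mul_one τ
  rw [h1]
  rfl

lemma w_mul_sp (τ : Equiv.Perm (Fin m)) (t : Fin m → ℝ) :
    wD m * SP τ t = SP τ (fun j => w0s m (τ j) * t j) := by
  rw [wD_eq, SP_mul]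
  have h1 : (1 : Equiv.Perm (Fin m)) * τ = τ := one_mul τ
  rw [h1]

lemma w0s_pm (j : Fin m) : w0s m j = 1 ∨ w0s m j = -1 := by
  unfold w0s
  split
  · exact Or.inl rfl
  · exact Or.inr rfl

lemma sp_comm_w_iff (hm : 1 ≤ m) (τ : Equiv.Perm (Fin m)) (t : Fin m → ℝ)
    (ht : ∀ j, t j = 1 ∨ t j = -1) :
    SP τ t * wD m = wD m * SP τ t ↔ τ ⟨m - 1, by omega⟩ = ⟨m - 1, by omega⟩ := by
  have ht0 : ∀ j, t j ≠ 0 := by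
    intro j
    rcases ht j with h | h <;> rw [h] <;> norm_num
  rw [sp_mul_w, w_mul_sp]
  constructor
  · intro h
    obtain ⟨-, hf⟩ := SP_inj (fun j => mul_ne_zero (ht0 j) (by
      rcases w0s_pm (m := m) j with h' | h' <;> rw [h'] <;> norm_num)) h
    have hj := congrFun hf ⟨m - 1, by omega⟩
    have hw : w0s m ⟨m - 1, by omega⟩ = 1 := by
      unfold w0s
      rw [if_pos rfl]
    rw [hw, mul_one] at hj
    by_contra hc
    have hwτ : w0s m (τ ⟨m - 1, by omega⟩) = -1 := by
      unfold w0s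
      rw [if_neg]
      intro hv
      exact hc (Fin.ext hv)
    rw [hwτ] at hj
    rcases ht ⟨m - 1, by omega⟩ with h' | h' <;> rw [h'] at hj <;> norm_num at hj
  · intro h
    have hw : ∀ j, w0s m (τ j) = w0s m j := by
      intro j
      unfold w0s
      by_cases hj : (j : ℕ) = m - 1
      · have hje : j = ⟨m - 1, by omega⟩ := Fin.ext hj
        rw [hje, h]
      · rw [if_neg hj, if_neg]
        intro hv
        apply hj
        have hτje : τ j = ⟨m - 1, by omega⟩ := Fin.ext hv
        rw [← h] at hτje
        rw [τ.injective hτje]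
    have hfe : (fun j => t j * w0s m j) = (fun j => w0s m (τ j) * t j) :=
      funext fun j => by rw [hw j]; ring
    rw [hfe]

lemma sp_inv (τ : Equiv.Perm (Fin m)) (t : Fin m → ℝ) (ht : ∀ j, t j = 1 ∨ t j = -1) :
    SP τ t * SP τ⁻¹ (fun j => t (τ⁻¹ j)) = 1 ∧
    SP τ⁻¹ (fun j => t (τ⁻¹ j)) * SP τ t = 1 ∧
    (SP τ t)⁻¹ = SP τ⁻¹ (fun j => t (τ⁻¹ j)) := by
  have hsq : ∀ x : ℝ, x = 1 ∨ x = -1 → x * x = 1 := by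
    rintro x (h | h) <;> rw [h] <;> norm_num
  have h1 : SP τ t * SP τ⁻¹ (fun j => t (τ⁻¹ j)) = 1 := by
    rw [SP_mul, ← SP_one]
    have hp : τ * τ⁻¹ = 1 := mul_inv_cancel τ
    have hfe : (fun j : Fin m => t (τ⁻¹ j) * t (τ⁻¹ j)) = (fun _ => 1) :=
      funext fun j => hsq _ (ht _)
    rw [hp, hfe]
  have h2 : SP τ⁻¹ (fun j => t (τ⁻¹ j)) * SP τ t = 1 := by
    rw [SP_mul, ← SP_one]
    have hp : τ⁻¹ * τ = 1 := inv_mul_cancel τ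
    have hfe : (fun j : Fin m => t (τ⁻¹ (τ j)) * t j) = (fun _ => 1) := funext fun j => by
      rw [show τ⁻¹ (τ j) = j from τ.symm_apply_apply j]
      exact hsq _ (ht _)
    rw [hp, hfe]
  exact ⟨h1, h2, Matrix.inv_eq_right_inv h1⟩

end S8

set_option maxHeartbeats 1000000 in
/-- Suppose `m` is odd and let `w₀ ∈ D_m` be the diagonal matrix sending `e_i ↦ −e_i` for
`1 ≤ i ≤ m−1` and `e_m ↦ e_m`.  Then every `u ∈ D_m` with `u² = 1` and `u w₀ = w₀ u` is
conjugate to `c_{k,l}`, for exactly one pair `(k,l)` of integers with `k, l ≥ 0` and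
`2k + l ≤ m−1`, by an element of the centralizer of `w₀` in `D_m`. -/
theorem stmt8 (m : ℕ) (hm : 3 ≤ m) (hodd : Odd m)
    (u : Matrix (Fin m) (Fin m) ℝ) (hu : InD u)
    (hu2 : u * u = 1) (hucomm : u * wD m = wD m * u) :
    ∃! p : ℕ × ℕ, 2 * p.1 + p.2 ≤ m - 1 ∧
      ∃ g : Matrix (Fin m) (Fin m) ℝ, InD g ∧ g * wD m = wD m * g ∧
        u = g * cD m p.1 p.2 * g⁻¹ := by
  have hm1 : 1 ≤ m := by omega
  obtain ⟨σ, s, hueq, hs⟩ := S8.exists_SP hu.1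
  have heven : Even ((Finset.univ.filter (fun j => s j = -1)).card) := by
    have h := hu.2
    rw [hueq, S8.card_neg_SP σ s hs] at h
    exact h
  have hs0 : ∀ j, s j ≠ 0 := fun j => by rcases hs j with h | h <;> rw [h] <;> norm_num
  have hinv2 : σ * σ = 1 ∧ (fun j => s (σ j) * s j) = (fun _ => (1 : ℝ)) := by
    apply S8.SP_inj (fun j => mul_ne_zero (hs0 _) (hs0 _))
    rw [← S8.SP_mul, ← hueq, hu2, S8.SP_one]
  have hinv : ∀ j, σ (σ j) = j := by
    intro j
    have h := Equiv.ext_iff.mp hinv2.1 j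
    simpa [Equiv.Perm.mul_apply] using h
  have hsinv : ∀ j, s (σ j) = s j := by
    intro j
    have h := congrFun hinv2.2 j
    beta_reduce at h
    rcases hs j with h1 | h1 <;> rcases hs (σ j) with h2 | h2 <;>
      rw [h1, h2] <;> rw [h1, h2] at h <;> norm_num at h
  have hlast : σ ⟨m - 1, by omega⟩ = ⟨m - 1, by omega⟩ := by
    have hcw : S8.SP σ s * wD m = wD m * S8.SP σ s := by rw [← hueq]; exact hucomm
    exact (S8.sp_comm_w_iff hm1 σ s hs).mp hcw
  set k := (Finset.univ.filter (fun j => j < σ j)).card with hk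
  set l := (Finset.univ.filter (fun j => σ j = j ∧ s j = -1 ∧ (j : ℕ) ≠ m - 1)).card with hl
  obtain ⟨hkl, τ, t, ht_pm, ht_even, hτlast, hcomm, hsign⟩ :=
    S8.construct hm σ s hs hinv hsinv hlast heven k l hk hl
  obtain ⟨hgr, hgl, hginv⟩ := S8.sp_inv τ t ht_pm
  set g := S8.SP τ t with hg
  have hgInD : InD g := ⟨S8.isSignedPerm_SP ht_pm, by
    rw [hg, S8.card_neg_SP τ t ht_pm]; exact ht_even⟩
  have hgw : g * wD m = wD m * g := (S8.sp_comm_w_iff hm1 τ t ht_pm).mpr hτlast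
  have hug : u * g = g * cD m k l := by
    rw [hueq, hg, S8.cD_eq hkl hm1, S8.SP_mul, S8.SP_mul]
    have h1 : σ * τ = τ * S8.cperm m k := Equiv.ext (fun j => by
      rw [Equiv.Perm.mul_apply, Equiv.Perm.mul_apply]; exact hcomm j)
    have h2 : (fun j => s (τ j) * t j)
        = (fun j => t (S8.cperm m k j) * S8.csign m k l j) := funext hsign
    rw [h1, h2]
  have hconj : u = g * cD m k l * g⁻¹ := by
    have hclear : u * g * S8.SP τ⁻¹ (fun j => t (τ⁻¹ j)) = u := by
      rw [Matrix.mul_assoc, hgr, Matrix.mul_one]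
    rw [hg, hginv, ← hg, ← hug, hclear]
  refine ⟨(k, l), ⟨hkl, g, hgInD, hgw, hconj⟩, ?_⟩
  rintro ⟨k', l'⟩ ⟨hb', g', hg'InD, hg'w, hconj'⟩
  obtain ⟨τ', t', hg'eq, ht'⟩ := S8.exists_SP hg'InD.1
  have ht'0 : ∀ j, t' j ≠ 0 := fun j => by rcases ht' j with h | h <;> rw [h] <;> norm_num
  obtain ⟨hgr', hgl', hginv'⟩ := S8.sp_inv τ' t' ht'
  have hτ'last : τ' ⟨m - 1, by omega⟩ = ⟨m - 1, by omega⟩ :=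
    (S8.sp_comm_w_iff hm1 τ' t' ht').mp (by rw [← hg'eq]; exact hg'w)
  have hug' : u * g' = g' * cD m k' l' := by
    have hstep : g' * cD m k' l' * g'⁻¹ * g' = g' * cD m k' l' := by
      rw [hg'eq, hginv', Matrix.mul_assoc, hgl', Matrix.mul_one]
    rw [hconj', hstep]
  rw [hueq, hg'eq, S8.cD_eq hb' hm1, S8.SP_mul, S8.SP_mul] at hug'
  obtain ⟨hperm, hfun⟩ := S8.SP_inj (fun j => mul_ne_zero (hs0 _) (ht'0 _)) hug'
  have hcomm' : ∀ j, σ (τ' j) = τ' (S8.cperm m k' j) := by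
    intro j
    have h := Equiv.ext_iff.mp hperm j
    simpa [Equiv.Perm.mul_apply] using h
  have hsig' : ∀ j, s (τ' j) * t' j = t' (S8.cperm m k' j) * S8.csign m k' l' j :=
    fun j => congrFun hfun j
  obtain ⟨hk', hl'⟩ := S8.unique_kl hm σ s τ' t' ht' hinv k' l' hb' hτ'last hcomm' hsig'
  simp only [Prod.mk.injEq]
  exact ⟨hk'.trans hk.symm, hl'.trans hl.symm⟩
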